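/- Let n > 1 be an integer not divisible by 3. There exists a bijection τ from the set of (3,n)-Dyck paths to itself such that for every (3,n)-Dyck path π: area(τ(π)) = dinv(π), dinv(τ(π)) = area(π), and skips(τ(π)) = skips(π). -/

import Mathlib

open scoped Classical

noncomputable section

/-- The rank of cell `(u,v)` in the `(m,n)`-diagram: `γ(u,v) = mn − un − (n+1−v)m`. -/
def rk (m n : ℕ) (u v : ℤ) : ℤ := (m : ℤ) * n - u * n - ((n : ℤ) + 1 - v) * m

/-- The cells `(u,v)`, `1 ≤ u ≤ m`, `1 ≤ v ≤ n`, of the `(m,n)`-diagram. -/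
def cells (m n : ℕ) : Finset (ℤ × ℤ) := Finset.Icc 1 (m : ℤ) ×ˢ Finset.Icc 1 (n : ℤ)

/-- `A` is the set of cells lying above some `(m,n)`-Dyck path: a northwest-closed set of
cells of the diagram, each lying strictly above the diagonal `y = (n/m)x`. -/
def IsDyckPath (m n : ℕ) (A : Finset (ℤ × ℤ)) : Prop :=
  A ⊆ cells m n ∧
  (∀ c ∈ A, 0 < (c.2 - 1) * (m : ℤ) - c.1 * n) ∧
  (∀ c ∈ A, ∀ x y : ℤ, 1 ≤ x → x ≤ c.1 → c.2 ≤ y → y ≤ (n : ℤ) → (x, y) ∈ A)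

/-- `arm(c)`: the number of cells above the path strictly east of `c` in its row. -/
def armOf (A : Finset (ℤ × ℤ)) (c : ℤ × ℤ) : ℕ :=
  (A.filter fun d => d.2 = c.2 ∧ c.1 < d.1).card

/-- `leg(c)`: the number of cells above the path strictly south of `c` in its column. -/
def legOf (A : Finset (ℤ × ℤ)) (c : ℤ × ℤ) : ℕ :=
  (A.filter fun d => d.1 = c.1 ∧ d.2 < c.2).card

/-- `Dinv(π)`: cells above the path with `arm/(leg+1) < m/n < (arm+1)/leg`
(stated cross-multiplied, so that division by zero is `+∞`). -/
def dinvSet (m n : ℕ) (A : Finset (ℤ × ℤ)) : Finset (ℤ × ℤ) :=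
  A.filter fun c =>
    (armOf A c : ℤ) * n < m * ((legOf A c : ℤ) + 1) ∧
    (m : ℤ) * (legOf A c : ℤ) < n * ((armOf A c : ℤ) + 1)

/-- `Skips(π)`: cells above the path not in `Dinv(π)`. -/
def skipsSet (m n : ℕ) (A : Finset (ℤ × ℤ)) : Finset (ℤ × ℤ) :=
  A.filter fun c => c ∉ dinvSet m n A

/-- `Area(π)`: cells of the diagram below the path having positive rank. -/
def areaSet (m n : ℕ) (A : Finset (ℤ × ℤ)) : Finset (ℤ × ℤ) :=
  (cells m n).filter fun c => 0 < rk m n c.1 c.2 ∧ c ∉ A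

def area (m n : ℕ) (A : Finset (ℤ × ℤ)) : ℕ := (areaSet m n A).card
def dinv (m n : ℕ) (A : Finset (ℤ × ℤ)) : ℕ := (dinvSet m n A).card
def skips (m n : ℕ) (A : Finset (ℤ × ℤ)) : ℕ := (skipsSet m n A).card

/-- The set of all `(m,n)`-Dyck paths (each identified with its set of cells above the path). -/
def dyckPaths (m n : ℕ) : Finset (Finset (ℤ × ℤ)) :=
  (cells m n).powerset.filter (IsDyckPath m n)

/-- The letters of the `(m,n)`-word, encoded as the pairs `(k, ℓ)` with `k, ℓ ≥ 1` and
rank `mn − km − ℓn > 0`; the color of the letter `(k, ℓ)` is `ℓ`. -/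
def letters (m n : ℕ) : Finset (ℤ × ℤ) :=
  (Finset.Icc 1 (n : ℤ) ×ˢ Finset.Icc 1 (m : ℤ)).filter fun p =>
    0 < (m : ℤ) * n - p.1 * m - p.2 * n

/-- The rank `mn − km − ℓn` of the letter `(k, ℓ)`. -/
def letterRank (m n : ℕ) (p : ℤ × ℤ) : ℤ := (m : ℤ) * n - p.1 * m - p.2 * n

/-- An `(m,n)`-rank word, identified with its set of highlighted letters: if `(k,ℓ)` is
highlighted then so is `(i,j)` for all `1 ≤ i ≤ k`, `1 ≤ j ≤ ℓ`. -/
def IsRankWord (m n : ℕ) (H : Finset (ℤ × ℤ)) : Prop :=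
  H ⊆ letters m n ∧
  ∀ p ∈ H, ∀ i j : ℤ, 1 ≤ i → i ≤ p.1 → 1 ≤ j → j ≤ p.2 → (i, j) ∈ H

/-- The set of all `(m,n)`-rank words. -/
def rankWords (m n : ℕ) : Finset (Finset (ℤ × ℤ)) :=
  (letters m n).powerset.filter (IsRankWord m n)

/-- The Dyck path `Π(w)` associated to a rank word: the cells above the path are exactly the
cells whose rank is a highlighted letter; the letter `(k,ℓ)` corresponds to the unique cell
`(ℓ, n+1−k)` of the diagram having the same rank. -/
def toPath (n : ℕ) (H : Finset (ℤ × ℤ)) : Finset (ℤ × ℤ) :=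
  H.image fun p => (p.2, (n : ℤ) + 1 - p.1)

/-- `area(w)`: the number of unhighlighted letters of the rank word. -/
def wordArea (m n : ℕ) (H : Finset (ℤ × ℤ)) : ℕ :=
  ((letters m n).filter fun p => p ∉ H).card

/-- `S(w)`: ordered pairs of letters `(a_k, b_ℓ)` with `a_k` highlighted, `b_ℓ` not
highlighted, and `a < b`. -/
def wordS (m n : ℕ) (H : Finset (ℤ × ℤ)) : Finset ((ℤ × ℤ) × (ℤ × ℤ)) :=
  (letters m n ×ˢ letters m n).filter fun pq =>
    pq.1 ∈ H ∧ pq.2 ∉ H ∧ letterRank m n pq.1 < letterRank m n pq.2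

/-- The relation on `S(w)`: `(a_k,b_ℓ) ∼ (c_r,d_t)` iff (`k = r` and `b ≡ d (mod n)`) or
(`ℓ = t` and `a ≡ c (mod n)`).  (The color of a letter is its second component.) -/
def wordRel (m n : ℕ) (x y : (ℤ × ℤ) × (ℤ × ℤ)) : Prop :=
  (x.1.2 = y.1.2 ∧ letterRank m n x.2 ≡ letterRank m n y.2 [ZMOD (n : ℤ)]) ∨
  (x.2.2 = y.2.2 ∧ letterRank m n x.1 ≡ letterRank m n y.1 [ZMOD (n : ℤ)])

/-- `skips(w)`: the number of equivalence classes of `S(w)` under the equivalence relation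
generated by `wordRel`. -/
def wordSkips (m n : ℕ) (H : Finset (ℤ × ℤ)) : ℕ :=
  Nat.card (Quot fun x y : {p // p ∈ wordS m n H} => wordRel m n x.1 y.1)

/-- `dinv(w) = (m−1)(n−1)/2 − area(w) − skips(w)`. -/
def wordDinv (m n : ℕ) (H : Finset (ℤ × ℤ)) : ℤ :=
  ((m : ℤ) - 1) * ((n : ℤ) - 1) / 2 - wordArea m n H - wordSkips m n H

/-- The generating function `W_{m,n}(b,q,t) = Σ_w b^{skips(w)} q^{dinv(w)} t^{area(w)}`. -/
def Wgen (m n : ℕ) (b q t : ℚ) : ℚ :=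
  ∑ H ∈ rankWords m n, b ^ wordSkips m n H * q ^ wordDinv m n H * t ^ wordArea m n H

/-- The rational `q,t`-Catalan polynomial `C_{m,n}(q,t) = Σ_π q^{dinv(π)} t^{area(π)}`. -/
def Cqt (m n : ℕ) (q t : ℚ) : ℚ :=
  ∑ A ∈ dyckPaths m n, q ^ dinv m n A * t ^ area m n A

/-- The two-variable Schur polynomial of a two-row partition `(l1, l2)`:
`s_{(l1,l2)}(q,t) = Σ_{j=0}^{l1−l2} q^{l2+j} t^{l1−j}`. -/
def schur2 (l1 l2 : ℕ) (q t : ℚ) : ℚ :=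
  ∑ j ∈ Finset.range (l1 - l2 + 1), q ^ (l2 + j) * t ^ (l1 - j)


namespace Stmt19Aux

open Finset

/-! ### Arithmetic layer -/

def Sfun (n a b : ℤ) : ℤ :=
  (if a - b - n/3 - 1 ≤ 0 then 0 else a - b - n/3 - 1) +
  (if a ≤ n/3 then b else if b + n/3 - a ≤ 0 then 0 else b + n/3 - a)

def sigA (n a b : ℤ) : ℤ :=
  if n - 1 - a - b ≤ n/3 then n - 1 - a - b
  else if (n - 1 - a - b - n/3) % 2 = 1 then (n - 1 - a - b - n/3 - 1)/2 + n/3 + 1 + Sfun n a b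
  else (n - 1 - a - b + n/3)/2

def sigB (n a b : ℤ) : ℤ :=
  if n - 1 - a - b ≤ n/3 then Sfun n a b
  else if (n - 1 - a - b - n/3) % 2 = 1 then (n - 1 - a - b - n/3 - 1)/2
  else (n - 1 - a - b + n/3)/2 - n/3 + Sfun n a b

lemma sigA_1 {n a b : ℤ} (h : n - 1 - a - b ≤ n/3) : sigA n a b = n - 1 - a - b := if_pos h
lemma sigB_1 {n a b : ℤ} (h : n - 1 - a - b ≤ n/3) : sigB n a b = Sfun n a b := if_pos h
lemma sigA_2 {n a b : ℤ} (h : ¬ n - 1 - a - b ≤ n/3) (h2 : (n - 1 - a - b - n/3) % 2 = 1) :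
    sigA n a b = (n - 1 - a - b - n/3 - 1)/2 + n/3 + 1 + Sfun n a b := by
  unfold sigA; rw [if_neg h, if_pos h2]
lemma sigB_2 {n a b : ℤ} (h : ¬ n - 1 - a - b ≤ n/3) (h2 : (n - 1 - a - b - n/3) % 2 = 1) :
    sigB n a b = (n - 1 - a - b - n/3 - 1)/2 := by
  unfold sigB; rw [if_neg h, if_pos h2]
lemma sigA_3 {n a b : ℤ} (h : ¬ n - 1 - a - b ≤ n/3) (h2 : ¬ (n - 1 - a - b - n/3) % 2 = 1) :
    sigA n a b = (n - 1 - a - b + n/3)/2 := by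
  unfold sigA; rw [if_neg h, if_neg h2]
lemma sigB_3 {n a b : ℤ} (h : ¬ n - 1 - a - b ≤ n/3) (h2 : ¬ (n - 1 - a - b - n/3) % 2 = 1) :
    sigB n a b = (n - 1 - a - b + n/3)/2 - n/3 + Sfun n a b := by
  unfold sigB; rw [if_neg h, if_neg h2]

section
set_option linter.unusedSectionVars false

variable {n a b : ℤ} (hn : 2 ≤ n) (h3 : n % 3 ≠ 0)
  (h1 : 0 ≤ b) (h2 : b ≤ a) (h4 : 3*a < 2*n) (h5 : 3*b < n)

include hn h3 h1 h2 h4 h5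

lemma S_char :
    (a ≤ n/3 ∧ Sfun n a b = b) ∨
    (n/3 < a ∧ a ≤ b + n/3 ∧ Sfun n a b = b - a + n/3) ∨
    (b + n/3 + 1 ≤ a ∧ Sfun n a b = a - b - n/3 - 1) := by
  unfold Sfun; split_ifs <;> omega

lemma sigma_valid : 0 ≤ sigB n a b ∧ sigB n a b ≤ sigA n a b ∧
    3 * sigA n a b < 2*n ∧ 3 * sigB n a b < n := by
  unfold sigA sigB Sfun; split_ifs <;> refine ⟨by omega, by omega, by omega, by omega⟩

lemma sigma_sum : sigA n a b + sigB n a b = n - 1 - a - b + Sfun n a b := by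
  unfold sigA sigB Sfun; split_ifs <;> omega

lemma sigma_S : Sfun n (sigA n a b) (sigB n a b) = Sfun n a b := by
  unfold sigA sigB Sfun; split_ifs <;> omega

lemma sigma_inv : sigA n (sigA n a b) (sigB n a b) = a ∧ sigB n (sigA n a b) (sigB n a b) = b := by
  have hsum := sigma_sum hn h3 h1 h2 h4 h5
  have hS := sigma_S hn h3 h1 h2 h4 h5
  set a2 := sigA n a b with ha2
  set b2 := sigB n a b with hb2
  rcases S_char hn h3 h1 h2 h4 h5 with ⟨hc, hs⟩ | ⟨hc, hc', hs⟩ | ⟨hc, hs⟩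
  · rw [sigA_1 (by omega), sigB_1 (by omega)]; omega
  · rw [sigA_3 (by omega) (by omega), sigB_3 (by omega) (by omega)]; omega
  · rw [sigA_2 (by omega) (by omega), sigB_2 (by omega) (by omega)]; omega

end

/-! ### Paths from pairs -/

def pathOf (n : ℕ) (p : ℤ × ℤ) : Finset (ℤ × ℤ) :=
  ({1} : Finset ℤ) ×ˢ Finset.Icc ((n:ℤ)+1-p.1) (n:ℤ) ∪
  ({2} : Finset ℤ) ×ˢ Finset.Icc ((n:ℤ)+1-p.2) (n:ℤ)

def ValidPair (n : ℕ) (p : ℤ × ℤ) : Prop :=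
  0 ≤ p.2 ∧ p.2 ≤ p.1 ∧ 3*p.1 < 2*(n:ℤ) ∧ 3*p.2 < (n:ℤ)

lemma mem_pathOf {n : ℕ} {p c : ℤ × ℤ} :
    c ∈ pathOf n p ↔ (c.1 = 1 ∧ (n:ℤ)+1-p.1 ≤ c.2 ∧ c.2 ≤ (n:ℤ)) ∨
      (c.1 = 2 ∧ (n:ℤ)+1-p.2 ≤ c.2 ∧ c.2 ≤ (n:ℤ)) := by
  unfold pathOf
  rw [Finset.mem_union, Finset.mem_product, Finset.mem_product, Finset.mem_singleton,
    Finset.mem_singleton, Finset.mem_Icc, Finset.mem_Icc]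

lemma pathOf_isDyck {n : ℕ} {p : ℤ × ℤ} (hn : 2 ≤ (n:ℤ)) (hp : ValidPair n p) :
    IsDyckPath 3 n (pathOf n p) := by
  obtain ⟨h1, h2, h4, h5⟩ := hp
  refine ⟨?_, ?_, ?_⟩
  · intro c hc
    rcases mem_pathOf.mp hc with ⟨hu, hlo, hhi⟩ | ⟨hu, hlo, hhi⟩ <;>
      simp only [cells, Finset.mem_product, Finset.mem_Icc] <;>
      refine ⟨⟨by omega, by omega⟩, by omega, by omega⟩
  · intro c hc
    rcases mem_pathOf.mp hc with ⟨hu, hlo, hhi⟩ | ⟨hu, hlo, hhi⟩ <;> rw [hu] <;> push_cast <;>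
      omega
  · intro c hc x y hx hxc hcy hyn
    rcases mem_pathOf.mp hc with ⟨hu, hlo, hhi⟩ | ⟨hu, hlo, hhi⟩
    · exact mem_pathOf.mpr (Or.inl ⟨by omega, by omega, hyn⟩)
    · rcases (by omega : x = 1 ∨ x = 2) with h | h
      · exact mem_pathOf.mpr (Or.inl ⟨h, by omega, hyn⟩)
      · exact mem_pathOf.mpr (Or.inr ⟨h, by omega, hyn⟩)

lemma card_pathOf {n : ℕ} {p : ℤ × ℤ} (hp : ValidPair n p) :
    ((pathOf n p).card : ℤ) = p.1 + p.2 := by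
  obtain ⟨h1, h2, h4, h5⟩ := hp
  have hd : Disjoint (({1} : Finset ℤ) ×ˢ Finset.Icc ((n:ℤ)+1-p.1) (n:ℤ))
      (({2} : Finset ℤ) ×ˢ Finset.Icc ((n:ℤ)+1-p.2) (n:ℤ)) := by
    rw [Finset.disjoint_left]
    rintro ⟨u, v⟩ hu hv
    simp only [Finset.mem_product, Finset.mem_singleton] at hu hv
    omega
  rw [pathOf, Finset.card_union_of_disjoint hd]
  simp only [Finset.card_product, Finset.card_singleton, Int.card_Icc, one_mul]
  push_cast
  omega

/-! ### arm and leg values -/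

lemma armOf_filter {n : ℕ} {p : ℤ × ℤ} (v : ℤ) :
    armOf (pathOf n p) (1, v) = if (n:ℤ)+1-p.2 ≤ v ∧ v ≤ (n:ℤ) then 1 else 0 := by
  unfold armOf
  split_ifs with h
  · rw [Finset.card_eq_one]
    refine ⟨(2, v), ?_⟩
    ext ⟨x, y⟩
    simp only [Finset.mem_filter, mem_pathOf, Finset.mem_singleton, Prod.mk.injEq]
    constructor
    · rintro ⟨hm | hm, h2, h3⟩ <;> omega
    · rintro ⟨hx, hy⟩; exact ⟨Or.inr ⟨by omega, by omega, by omega⟩, by omega, by omega⟩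
  · rw [Finset.card_eq_zero]
    ext ⟨x, y⟩
    simp only [Finset.mem_filter, mem_pathOf, Finset.notMem_empty, iff_false, not_and]
    rintro (hm | hm) h2 <;> omega

lemma armOf_two {n : ℕ} {p : ℤ × ℤ} (v : ℤ) : armOf (pathOf n p) (2, v) = 0 := by
  unfold armOf
  rw [Finset.card_eq_zero]
  ext ⟨x, y⟩
  simp only [Finset.mem_filter, mem_pathOf, Finset.notMem_empty, iff_false, not_and]
  rintro (hm | hm) h2 <;> omega

lemma legOf_one {n : ℕ} {p : ℤ × ℤ} {v : ℤ} (hv : v ≤ (n:ℤ) + 1) :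
    legOf (pathOf n p) (1, v) = (v - ((n:ℤ)+1-p.1)).toNat := by
  unfold legOf
  have : (pathOf n p).filter (fun d => d.1 = 1 ∧ d.2 < v) =
      ({1} : Finset ℤ) ×ˢ Finset.Icc ((n:ℤ)+1-p.1) (v-1) := by
    ext ⟨x, y⟩
    simp only [Finset.mem_filter, mem_pathOf, Finset.mem_product, Finset.mem_singleton,
      Finset.mem_Icc]
    constructor
    · rintro ⟨hm | hm, h2, h3⟩ <;> omega
    · rintro ⟨hx, hy1, hy2⟩
      exact ⟨Or.inl ⟨hx, by omega, by omega⟩, by omega, by omega⟩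
  rw [this, Finset.card_product, Finset.card_singleton, Int.card_Icc, one_mul]
  congr 1
  omega

lemma legOf_two {n : ℕ} {p : ℤ × ℤ} {v : ℤ} (hv : v ≤ (n:ℤ) + 1) :
    legOf (pathOf n p) (2, v) = (v - ((n:ℤ)+1-p.2)).toNat := by
  unfold legOf
  have : (pathOf n p).filter (fun d => d.1 = 2 ∧ d.2 < v) =
      ({2} : Finset ℤ) ×ˢ Finset.Icc ((n:ℤ)+1-p.2) (v-1) := by
    ext ⟨x, y⟩
    simp only [Finset.mem_filter, mem_pathOf, Finset.mem_product, Finset.mem_singleton,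
      Finset.mem_Icc]
    constructor
    · rintro ⟨hm | hm, h2, h3⟩ <;> omega
    · rintro ⟨hx, hy1, hy2⟩
      exact ⟨Or.inr ⟨hx, by omega, by omega⟩, by omega, by omega⟩
  rw [this, Finset.card_product, Finset.card_singleton, Int.card_Icc, one_mul]
  congr 1
  omega

lemma mem_skipsSet_iff {m n : ℕ} {A : Finset (ℤ × ℤ)} {c : ℤ × ℤ} :
    c ∈ skipsSet m n A ↔ c ∈ A ∧
      ¬((armOf A c : ℤ) * n < m * ((legOf A c : ℤ) + 1) ∧
        (m : ℤ) * (legOf A c : ℤ) < n * ((armOf A c : ℤ) + 1)) := by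
  simp only [skipsSet, dinvSet, Finset.mem_filter]
  tauto

/-! ### the statistics of `pathOf p` -/

lemma skipsSet_pathOf {n : ℕ} {p : ℤ × ℤ} (hn : 2 ≤ (n:ℤ)) (h3 : ¬ (3:ℤ) ∣ (n:ℤ))
    (hp : ValidPair n p) :
    skipsSet 3 n (pathOf n p) = ({1} : Finset ℤ) ×ˢ
      (Finset.Icc ((n:ℤ)+2+(n:ℤ)/3-p.1) ((n:ℤ)-p.2) ∪
       Finset.Icc ((n:ℤ)+1-p.2) (min ((n:ℤ)) ((n:ℤ)+(n:ℤ)/3-p.1))) := by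
  obtain ⟨h1, h2, h4, h5⟩ := hp
  ext ⟨u, v⟩
  rw [mem_skipsSet_iff]
  simp only [mem_pathOf, Finset.mem_product, Finset.mem_singleton, Finset.mem_union,
    Finset.mem_Icc, le_min_iff, min_le_iff]
  constructor
  · rintro ⟨hm, hc⟩
    rcases hm with ⟨hu, hlo, hhi⟩ | ⟨hu, hlo, hhi⟩
    · subst hu
      rw [armOf_filter, legOf_one (by omega)] at hc
      refine ⟨rfl, ?_⟩
      split_ifs at hc with harm <;> push_cast at hc <;> omega
    · subst hu
      rw [armOf_two, legOf_two (by omega)] at hc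
      push_cast at hc
      omega
  · rintro ⟨hu, hv⟩
    subst hu
    have hvn : v ≤ (n:ℤ) := by rcases hv with ⟨hl, hr⟩ | ⟨hl, hr, hr'⟩ <;> omega
    have hvl : (n:ℤ)+1-p.1 ≤ v := by rcases hv with ⟨hl, hr⟩ | ⟨hl, hr, hr'⟩ <;> omega
    refine ⟨Or.inl ⟨rfl, hvl, hvn⟩, ?_⟩
    rw [armOf_filter, legOf_one (by omega)]
    split_ifs with harm <;> push_cast <;>
      rcases hv with ⟨hl, hr⟩ | ⟨hl, hr, hr'⟩ <;> omega

lemma skips_pathOf {n : ℕ} {p : ℤ × ℤ} (hn : 2 ≤ (n:ℤ)) (h3 : ¬ (3:ℤ) ∣ (n:ℤ))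
    (hp : ValidPair n p) :
    (skips 3 n (pathOf n p) : ℤ) = Sfun (n:ℤ) p.1 p.2 := by
  obtain ⟨h1, h2, h4, h5⟩ := hp
  rw [skips, skipsSet_pathOf hn h3 ⟨h1, h2, h4, h5⟩]
  have hd : Disjoint (Finset.Icc ((n:ℤ)+2+(n:ℤ)/3-p.1) ((n:ℤ)-p.2))
      (Finset.Icc ((n:ℤ)+1-p.2) (min ((n:ℤ)) ((n:ℤ)+(n:ℤ)/3-p.1))) := by
    rw [Finset.disjoint_left]
    intro x hx hx'
    simp only [Finset.mem_Icc, le_min_iff] at hx hx'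
    omega
  rw [Finset.card_product, Finset.card_singleton, one_mul,
    Finset.card_union_of_disjoint hd, Int.card_Icc, Int.card_Icc]
  rcases le_total ((n:ℤ)) ((n:ℤ)+(n:ℤ)/3-p.1) with hmin | hmin
  · rw [min_eq_left hmin]; unfold Sfun; push_cast; split_ifs <;> omega
  · rw [min_eq_right hmin]; unfold Sfun; push_cast; split_ifs <;> omega

lemma dinv_pathOf {n : ℕ} {p : ℤ × ℤ} (hn : 2 ≤ (n:ℤ)) (h3 : ¬ (3:ℤ) ∣ (n:ℤ))
    (hp : ValidPair n p) :
    (dinv 3 n (pathOf n p) : ℤ) = p.1 + p.2 - Sfun (n:ℤ) p.1 p.2 := by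
  have hsub : dinvSet 3 n (pathOf n p) ⊆ pathOf n p := Finset.filter_subset _ _
  have hsk : skipsSet 3 n (pathOf n p) = pathOf n p \ dinvSet 3 n (pathOf n p) := by
    ext c
    simp only [skipsSet, dinvSet, Finset.mem_filter, Finset.mem_sdiff]
    try tauto
  have hcard : skips 3 n (pathOf n p) = (pathOf n p).card - dinv 3 n (pathOf n p) := by
    unfold skips dinv
    rw [hsk, Finset.card_sdiff_of_subset hsub]
  have hle : dinv 3 n (pathOf n p) ≤ (pathOf n p).card := Finset.card_le_card hsub
  have h1 := skips_pathOf hn h3 hp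
  have h2 := card_pathOf hp
  omega

lemma posRank_cells {n : ℕ} (hn : 2 ≤ (n:ℤ)) (h3 : ¬ (3:ℤ) ∣ (n:ℤ)) :
    (cells 3 n).filter (fun c => 0 < rk 3 n c.1 c.2) =
      ({1} : Finset ℤ) ×ˢ Finset.Icc ((n:ℤ)/3+2) ((n:ℤ)) ∪
      ({2} : Finset ℤ) ×ˢ Finset.Icc ((n:ℤ)+1-(n:ℤ)/3) ((n:ℤ)) := by
  ext ⟨u, v⟩
  rw [Finset.mem_filter]
  simp only [Finset.mem_filter, cells, rk, Finset.mem_product, Finset.mem_Icc,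
    Finset.mem_union, Finset.mem_singleton]
  constructor
  · rintro ⟨⟨⟨hu1, hu3⟩, hv1, hvn⟩, hrk⟩
    rcases (by push_cast at hu3; omega : u = 1 ∨ u = 2 ∨ u = 3) with rfl | rfl | rfl <;>
      push_cast at hrk hvn ⊢ <;>
      simp only [true_and, false_and, false_or, or_false, or_self] <;> omega
  · rintro (⟨rfl, hv1, hvn⟩ | ⟨rfl, hv1, hvn⟩) <;>
      exact ⟨⟨by norm_num, by omega⟩, by push_cast; omega⟩

lemma area_pathOf {n : ℕ} {p : ℤ × ℤ} (hn : 2 ≤ (n:ℤ)) (h3 : ¬ (3:ℤ) ∣ (n:ℤ))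
    (hp : ValidPair n p) :
    (area 3 n (pathOf n p) : ℤ) = (n:ℤ) - 1 - p.1 - p.2 := by
  obtain ⟨h1, h2, h4, h5⟩ := hp
  have hPR : areaSet 3 n (pathOf n p) =
      ((cells 3 n).filter (fun c => 0 < rk 3 n c.1 c.2)) \ pathOf n p := by
    rw [areaSet, Finset.sdiff_eq_filter, Finset.filter_filter]
  have hsub : pathOf n p ⊆ (cells 3 n).filter (fun c => 0 < rk 3 n c.1 c.2) := by
    rw [posRank_cells hn h3]
    intro c hc
    rcases mem_pathOf.mp hc with ⟨hu, hlo, hhi⟩ | ⟨hu, hlo, hhi⟩ <;>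
      simp only [Finset.mem_union, Finset.mem_product, Finset.mem_singleton, Finset.mem_Icc]
    · exact Or.inl ⟨hu, by omega, hhi⟩
    · exact Or.inr ⟨hu, by omega, hhi⟩
  have hcardPR : (((cells 3 n).filter (fun c => 0 < rk 3 n c.1 c.2)).card : ℤ) = (n:ℤ) - 1 := by
    rw [posRank_cells hn h3]
    have hd : Disjoint (({1} : Finset ℤ) ×ˢ Finset.Icc ((n:ℤ)/3+2) ((n:ℤ)))
        (({2} : Finset ℤ) ×ˢ Finset.Icc ((n:ℤ)+1-(n:ℤ)/3) ((n:ℤ))) := by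
      rw [Finset.disjoint_left]
      rintro ⟨x, y⟩ hx hy
      simp only [Finset.mem_product, Finset.mem_singleton] at hx hy
      omega
    rw [Finset.card_union_of_disjoint hd]
    simp only [Finset.card_product, Finset.card_singleton, Int.card_Icc, one_mul]
    push_cast
    omega
  have hle : (pathOf n p).card ≤ ((cells 3 n).filter (fun c => 0 < rk 3 n c.1 c.2)).card :=
    Finset.card_le_card hsub
  have hc := card_pathOf ⟨h1, h2, h4, h5⟩
  rw [area, hPR, Finset.card_sdiff_of_subset hsub]
  omega

/-! ### structure of Dyck paths -/

lemma upclosed {N : ℤ} {S : Finset ℤ} (hub : ∀ v ∈ S, v ≤ N)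
    (hcl : ∀ v ∈ S, ∀ y : ℤ, v ≤ y → y ≤ N → y ∈ S) :
    S = Finset.Icc (N + 1 - S.card) N := by
  rcases S.eq_empty_or_nonempty with h | h
  · subst h
    rw [Finset.card_empty]
    exact (Finset.Icc_eq_empty (by push_cast; omega)).symm
  · have hmin := S.min'_mem h
    have hS : S = Finset.Icc (S.min' h) N := by
      ext x
      rw [Finset.mem_Icc]
      exact ⟨fun hx => ⟨S.min'_le x hx, hub x hx⟩, fun ⟨hx1, hx2⟩ => hcl _ hmin x hx1 hx2⟩
    rw [hS]
    congr 1
    rw [Int.card_Icc]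
    have := hub _ hmin
    omega

lemma exists_pair {n : ℕ} (hn : 2 ≤ (n:ℤ)) {A : Finset (ℤ × ℤ)} (hA : IsDyckPath 3 n A) :
    ∃ p : ℤ × ℤ, ValidPair n p ∧ A = pathOf n p := by
  obtain ⟨hsub, hdiag, hcl⟩ := hA
  have hbound : ∀ c ∈ A, (1 ≤ c.1 ∧ c.1 ≤ (3:ℤ)) ∧ 1 ≤ c.2 ∧ c.2 ≤ (n:ℤ) := by
    intro c hc
    have := hsub hc
    simp only [cells, Finset.mem_product, Finset.mem_Icc] at this
    push_cast at this
    exact this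
  have hm : ∀ u v : ℤ, v ∈ ((A.filter (fun c => c.1 = u)).image Prod.snd) ↔ (u, v) ∈ A := by
    intro u v
    simp only [Finset.mem_image, Finset.mem_filter]
    constructor
    · rintro ⟨⟨x, y⟩, ⟨hxA, hx1⟩, hy⟩
      simp only at hx1 hy
      subst hx1; subst hy; exact hxA
    · intro hv; exact ⟨(u, v), ⟨hv, rfl⟩, rfl⟩
  have hup : ∀ u : ℤ, 1 ≤ u →
      (A.filter (fun c => c.1 = u)).image Prod.snd =
        Finset.Icc ((n:ℤ) + 1 - ((A.filter (fun c => c.1 = u)).image Prod.snd).card) n := by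
    intro u hu
    refine upclosed (fun v hv => (hbound _ ((hm u v).mp hv)).2.2) ?_
    intro v hv y hvy hyn
    exact (hm u y).mpr (hcl _ ((hm u v).mp hv) u y hu le_rfl hvy hyn)
  set a := ((A.filter (fun c => c.1 = 1)).image Prod.snd).card with ha
  set b := ((A.filter (fun c => c.1 = 2)).image Prod.snd).card with hb
  have h1 := hup 1 le_rfl
  have h2 := hup 2 (by norm_num)
  have hno3 : ∀ v : ℤ, ((3:ℤ), v) ∉ A := by
    intro v hv
    have hd := hdiag _ hv
    have hb' := hbound _ hv
    try simp only at hd hb'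
    push_cast at hd
    omega
  have hsubset : ((A.filter (fun c => c.1 = 2)).image Prod.snd) ⊆
      ((A.filter (fun c => c.1 = 1)).image Prod.snd) := by
    intro v hv
    exact (hm 1 v).mpr (hcl _ ((hm 2 v).mp hv) 1 v le_rfl (by norm_num) le_rfl
      (hbound _ ((hm 2 v).mp hv)).2.2)
  have hba : b ≤ a := Finset.card_le_card hsubset
  have hAeq : A = pathOf n ((a : ℤ), (b : ℤ)) := by
    ext ⟨u, v⟩
    rw [mem_pathOf]
    constructor
    · intro hc
      have hb' := hbound _ hc
      simp only at hb'
      rcases (by omega : u = 1 ∨ u = 2 ∨ u = 3) with rfl | rfl | rfl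
      · have := (hm 1 v).mpr hc
        rw [h1, Finset.mem_Icc] at this
        exact Or.inl ⟨by trivial, this.1, this.2⟩
      · have := (hm 2 v).mpr hc
        rw [h2, Finset.mem_Icc] at this
        exact Or.inr ⟨by trivial, this.1, this.2⟩
      · exact absurd hc (hno3 v)
    · rintro (⟨rfl, hl, hr⟩ | ⟨rfl, hl, hr⟩)
      · exact (hm 1 v).mp (by rw [h1, Finset.mem_Icc]; exact ⟨hl, hr⟩)
      · exact (hm 2 v).mp (by rw [h2, Finset.mem_Icc]; exact ⟨hl, hr⟩)
  refine ⟨((a : ℤ), (b : ℤ)), ⟨by show (0:ℤ) ≤ (b:ℤ); exact Int.natCast_nonneg _,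
    by show ((b:ℤ)) ≤ ((a:ℤ)); exact_mod_cast hba, ?_, ?_⟩, hAeq⟩
  · show 3 * ((a:ℤ)) < 2 * (n:ℤ)
    rcases Nat.eq_zero_or_pos a with h0 | h0
    · omega
    · have hv : ((n:ℤ) + 1 - a) ∈ ((A.filter (fun c => c.1 = 1)).image Prod.snd) := by
        rw [h1, Finset.mem_Icc]; omega
      have hd := hdiag _ ((hm 1 _).mp hv)
      try simp only at hd
      push_cast at hd
      omega
  · show 3 * ((b:ℤ)) < (n:ℤ)
    rcases Nat.eq_zero_or_pos b with h0 | h0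
    · omega
    · have hv : ((n:ℤ) + 1 - b) ∈ ((A.filter (fun c => c.1 = 2)).image Prod.snd) := by
        rw [h2, Finset.mem_Icc]; omega
      have hd := hdiag _ ((hm 2 _).mp hv)
      try simp only at hd
      push_cast at hd
      omega

lemma pathOf_inj {n : ℕ} {p p' : ℤ × ℤ} (hn : 2 ≤ (n:ℤ)) (hp : ValidPair n p)
    (hp' : ValidPair n p') (h : pathOf n p = pathOf n p') : p = p' := by
  obtain ⟨pa, pb⟩ := p
  obtain ⟨pa', pb'⟩ := p'
  obtain ⟨h1, h2, h4, h5⟩ := hp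
  obtain ⟨h1', h2', h4', h5'⟩ := hp'
  simp only at h1 h2 h4 h5 h1' h2' h4' h5'
  have key : ∀ u v : ℤ, (u = 1 ∨ u = 2) → ((u, v) ∈ pathOf n (pa, pb) ↔
      (u, v) ∈ pathOf n (pa', pb')) := fun u v _ => by rw [h]
  have k1 : ∀ v : ℤ, ((n:ℤ)+1-pa ≤ v ∧ v ≤ n) ↔ ((n:ℤ)+1-pa' ≤ v ∧ v ≤ n) := by
    intro v
    have := key 1 v (Or.inl rfl)
    rw [mem_pathOf, mem_pathOf] at this
    try simp only at this
    constructor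
    · intro hv
      rcases this.mp (Or.inl ⟨by trivial, hv.1, hv.2⟩) with ⟨hc, hl, hr⟩ | ⟨hc, hl, hr⟩ <;>
        first | exact hc.elim | omega
    · intro hv
      rcases this.mpr (Or.inl ⟨by trivial, hv.1, hv.2⟩) with ⟨hc, hl, hr⟩ | ⟨hc, hl, hr⟩ <;>
        first | exact hc.elim | omega
  have k2 : ∀ v : ℤ, ((n:ℤ)+1-pb ≤ v ∧ v ≤ n) ↔ ((n:ℤ)+1-pb' ≤ v ∧ v ≤ n) := by
    intro v
    have := key 2 v (Or.inr rfl)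
    rw [mem_pathOf, mem_pathOf] at this
    try simp only at this
    constructor
    · intro hv
      rcases this.mp (Or.inr ⟨by trivial, hv.1, hv.2⟩) with ⟨hc, hl, hr⟩ | ⟨hc, hl, hr⟩ <;>
        first | exact hc.elim | omega
    · intro hv
      rcases this.mpr (Or.inr ⟨by trivial, hv.1, hv.2⟩) with ⟨hc, hl, hr⟩ | ⟨hc, hl, hr⟩ <;>
        first | exact hc.elim | omega
  have e1 := k1 ((n:ℤ)+1-pa)
  have e1' := k1 ((n:ℤ)+1-pa')
  have e2 := k2 ((n:ℤ)+1-pb)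
  have e2' := k2 ((n:ℤ)+1-pb')
  simp only [Prod.mk.injEq]
  omega

end Stmt19Aux

/-- There is a bijection `τ` on the set of `(3,n)`-Dyck paths exchanging `area` and `dinv`
while preserving `skips`. -/
theorem stmt19 (n : ℕ) (hn : 1 < n) (h3 : ¬ (3 ∣ n)) :
    ∃ τ : {A : Finset (ℤ × ℤ) // IsDyckPath 3 n A} ≃
          {A : Finset (ℤ × ℤ) // IsDyckPath 3 n A},
      ∀ A, area 3 n (τ A).1 = dinv 3 n A.1 ∧ dinv 3 n (τ A).1 = area 3 n A.1 ∧
        skips 3 n (τ A).1 = skips 3 n A.1 := by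
  have hn2 : 2 ≤ (n:ℤ) := by exact_mod_cast hn
  have h3' : ¬ (3:ℤ) ∣ (n:ℤ) := by exact_mod_cast h3
  have h3'' : (n:ℤ) % 3 ≠ 0 := by omega
  let g : {p : ℤ × ℤ // Stmt19Aux.ValidPair n p} → {A : Finset (ℤ × ℤ) // IsDyckPath 3 n A} :=
    fun p => ⟨Stmt19Aux.pathOf n p.1, Stmt19Aux.pathOf_isDyck hn2 p.2⟩
  have hbij : Function.Bijective g := by
    constructor
    · rintro ⟨p, hp⟩ ⟨p', hp'⟩ hpp
      exact Subtype.ext (Stmt19Aux.pathOf_inj hn2 hp hp' (Subtype.ext_iff.mp hpp))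
    · rintro ⟨A, hA⟩
      obtain ⟨p, hp, hAp⟩ := Stmt19Aux.exists_pair hn2 hA
      exact ⟨⟨p, hp⟩, Subtype.ext hAp.symm⟩
  let e := Equiv.ofBijective g hbij
  have hσv : ∀ p : {p : ℤ × ℤ // Stmt19Aux.ValidPair n p},
      Stmt19Aux.ValidPair n (Stmt19Aux.sigA (n:ℤ) p.1.1 p.1.2,
        Stmt19Aux.sigB (n:ℤ) p.1.1 p.1.2) := by
    rintro ⟨⟨a, b⟩, h1, h2, h4, h5⟩
    obtain ⟨k1, k2, k3, k4⟩ := Stmt19Aux.sigma_valid hn2 h3'' h1 h2 h4 h5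
    exact ⟨k1, k2, k3, k4⟩
  let σ : {p : ℤ × ℤ // Stmt19Aux.ValidPair n p} ≃ {p : ℤ × ℤ // Stmt19Aux.ValidPair n p} :=
    { toFun := fun p => ⟨_, hσv p⟩
      invFun := fun p => ⟨_, hσv p⟩
      left_inv := by
        rintro ⟨⟨a, b⟩, h1, h2, h4, h5⟩
        obtain ⟨k1, k2⟩ := Stmt19Aux.sigma_inv hn2 h3'' h1 h2 h4 h5
        exact Subtype.ext (Prod.ext k1 k2)
      right_inv := by
        rintro ⟨⟨a, b⟩, h1, h2, h4, h5⟩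
        obtain ⟨k1, k2⟩ := Stmt19Aux.sigma_inv hn2 h3'' h1 h2 h4 h5
        exact Subtype.ext (Prod.ext k1 k2) }
  refine ⟨(e.symm.trans (σ.trans e)), ?_⟩
  intro A
  set p := e.symm A with hpdef
  have hAe : g p = A := e.apply_symm_apply A
  have hA1 : A.1 = Stmt19Aux.pathOf n p.1 := by rw [← hAe]
  have hτ : ((e.symm.trans (σ.trans e)) A).1 =
      Stmt19Aux.pathOf n (Stmt19Aux.sigA (n:ℤ) p.1.1 p.1.2,
        Stmt19Aux.sigB (n:ℤ) p.1.1 p.1.2) := rfl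
  obtain ⟨h1, h2, h4, h5⟩ := p.2
  have hsum := Stmt19Aux.sigma_sum hn2 h3'' h1 h2 h4 h5
  have hS := Stmt19Aux.sigma_S hn2 h3'' h1 h2 h4 h5
  have hA_area := Stmt19Aux.area_pathOf hn2 h3' p.2
  have hA_dinv := Stmt19Aux.dinv_pathOf hn2 h3' p.2
  have hA_skips := Stmt19Aux.skips_pathOf hn2 h3' p.2
  have hT_area := Stmt19Aux.area_pathOf hn2 h3' (hσv p)
  have hT_dinv := Stmt19Aux.dinv_pathOf hn2 h3' (hσv p)
  have hT_skips := Stmt19Aux.skips_pathOf hn2 h3' (hσv p)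
  try dsimp only at hT_area hT_dinv hT_skips
  refine ⟨?_, ?_, ?_⟩ <;> rw [hτ, hA1] <;> omega

end
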